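/- For every N ≥ 1 and every permutation σ of [N]×[N], one has Z_N(σ) ≤ N · Y_N(σ,σ). Consequently, if a sequence (σ_N)_N of permutations (σ_N of [N]×[N]) satisfies condition (C), i.e. Y_N(σ_N,σ_N)/N³ → 0, then it satisfies both condition (C1), i.e. Z_N(σ_N)/N⁴ → 0, and condition (C2), i.e. X_N(σ_N, id)/N² → 0, where id is the identity permutation of [N]×[N]. -/

import Mathlib

open Filter Finset

/-- `X_N(σ,τ) = |{(i,j,k) : σ(i,j) ∈ {τ(i,k), τ(k,j)}}|`. -/
def Xcnt (N : ℕ) (σ τ : Equiv.Perm (Fin N × Fin N)) : ℕ :=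
  (Finset.univ.filter fun x : Fin N × Fin N × Fin N =>
    σ (x.1, x.2.1) = τ (x.1, x.2.2) ∨ σ (x.1, x.2.1) = τ (x.2.2, x.2.1)).card

/-- `Y_N(σ,τ) = Y_{1,N}(σ,τ) + Y_{2,N}(σ,τ)` where `Y_{1,N}` counts the triples `(i,j,k)` with
`π1(σ(i,j)) ∈ {π1(τ(i,k)), π1(τ(k,j))}`, and `Y_{2,N}` the ones with
`π2(σ(i,j)) ∈ {π2(τ(i,k)), π2(τ(k,j))}`. -/
def Ycnt (N : ℕ) (σ τ : Equiv.Perm (Fin N × Fin N)) : ℕ :=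
  (Finset.univ.filter fun x : Fin N × Fin N × Fin N =>
    (σ (x.1, x.2.1)).1 = (τ (x.1, x.2.2)).1 ∨ (σ (x.1, x.2.1)).1 = (τ (x.2.2, x.2.1)).1).card +
  (Finset.univ.filter fun x : Fin N × Fin N × Fin N =>
    (σ (x.1, x.2.1)).2 = (τ (x.1, x.2.2)).2 ∨ (σ (x.1, x.2.1)).2 = (τ (x.2.2, x.2.1)).2).card

/-- `Z_N(σ)`, as in condition (C1). -/
def Zcnt (N : ℕ) (σ : Equiv.Perm (Fin N × Fin N)) : ℕ :=
  (Finset.univ.filter fun x : Fin N × Fin N × Fin N × Fin N =>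
    σ (x.1, x.2.1) = ((σ (x.1, x.2.2.2)).1, (σ (x.2.2.1, x.2.1)).2)).card +
  (Finset.univ.filter fun x : Fin N × Fin N × Fin N × Fin N =>
    σ (x.1, x.2.1) = ((σ (x.2.2.1, x.2.1)).1, (σ (x.1, x.2.2.2)).2)).card

/-- Forgetting one coordinate bound. -/
lemma quad_le_aux (N : ℕ) (Q : Fin N × Fin N × Fin N × Fin N → Prop) [DecidablePred Q]
    (P : Fin N × Fin N × Fin N → Prop) [DecidablePred P]
    (h : ∀ x, Q x → P (x.1, x.2.1, x.2.2.2)) :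
    (Finset.univ.filter Q).card ≤ N * (Finset.univ.filter P).card := by
  have := Finset.card_le_card_of_injOn
    (f := fun x : Fin N × Fin N × Fin N × Fin N => (((x.1, x.2.1, x.2.2.2) : _), x.2.2.1))
    (s := Finset.univ.filter Q) (t := (Finset.univ.filter P) ×ˢ Finset.univ)
    (by
      intro x hx
      simp only [Finset.mem_coe, Finset.mem_filter, Finset.mem_univ, true_and] at hx
      simp only [Finset.mem_coe, Finset.mem_product, Finset.mem_filter, Finset.mem_univ, true_and]
      exact ⟨h x hx, trivial⟩)
    (by
      intro x _ y _ hxy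
      simp only [Prod.mk.injEq] at hxy
      obtain ⟨⟨h1, h2, h3⟩, h4⟩ := hxy
      exact Prod.ext h1 (Prod.ext h2 (Prod.ext h4 h3)))
  calc (Finset.univ.filter Q).card ≤ _ := this
    _ = (Finset.univ.filter P).card * N := by
        rw [Finset.card_product]; simp
    _ = N * (Finset.univ.filter P).card := Nat.mul_comm _ _

lemma Z_le_NY (N : ℕ) (σ : Equiv.Perm (Fin N × Fin N)) : Zcnt N σ ≤ N * Ycnt N σ σ := by
  unfold Zcnt Ycnt
  have h1 := quad_le_aux N
    (fun x => σ (x.1, x.2.1) = ((σ (x.1, x.2.2.2)).1, (σ (x.2.2.1, x.2.1)).2))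
    (fun x : Fin N × Fin N × Fin N =>
      (σ (x.1, x.2.1)).1 = (σ (x.1, x.2.2)).1 ∨ (σ (x.1, x.2.1)).1 = (σ (x.2.2, x.2.1)).1)
    (by intro x hx; left; rw [hx])
  have h2 := quad_le_aux N
    (fun x => σ (x.1, x.2.1) = ((σ (x.2.2.1, x.2.1)).1, (σ (x.1, x.2.2.2)).2))
    (fun x : Fin N × Fin N × Fin N =>
      (σ (x.1, x.2.1)).2 = (σ (x.1, x.2.2)).2 ∨ (σ (x.1, x.2.1)).2 = (σ (x.2.2, x.2.1)).2)
    (by intro x hx; left; rw [hx])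
  rw [Nat.mul_add]; omega

/-- Cauchy–Schwarz style counting lemma. -/
lemma cs_aux (N : ℕ) (A : Finset (Fin N × Fin N)) (g : Fin N × Fin N → Fin N) :
    A.card ^ 2 ≤ N * ((A ×ˢ A).filter fun q => g q.1 = g q.2).card := by
  classical
  set a : Fin N → ℕ := fun i => (A.filter fun p => g p = i).card with ha
  have hA : A.card = ∑ i : Fin N, a i :=
    Finset.card_eq_sum_card_fiberwise (fun p _ => Finset.mem_univ (g p))
  have hP : ((A ×ˢ A).filter fun q => g q.1 = g q.2).card = ∑ i : Fin N, a i ^ 2 := by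
    have := Finset.card_eq_sum_card_fiberwise
      (s := (A ×ˢ A).filter fun q => g q.1 = g q.2) (t := Finset.univ)
      (f := fun q => g q.1) (fun q _ => Finset.mem_univ _)
    rw [this]
    refine Finset.sum_congr rfl fun i _ => ?_
    have : (((A ×ˢ A).filter fun q => g q.1 = g q.2).filter fun q => g q.1 = i)
        = (A.filter fun p => g p = i) ×ˢ (A.filter fun p => g p = i) := by
      ext q
      simp only [Finset.mem_filter, Finset.mem_product]
      constructor
      · rintro ⟨⟨⟨h1, h2⟩, h3⟩, h4⟩
        exact ⟨⟨h1, h4⟩, h2, h3 ▸ h4⟩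
      · rintro ⟨⟨h1, h4⟩, h2, h5⟩
        exact ⟨⟨⟨h1, h2⟩, h4.trans h5.symm⟩, h4⟩
    rw [this, Finset.card_product, sq]
  have key : (∑ i : Fin N, (a i : ℝ)) ^ 2 ≤ N * ∑ i : Fin N, (a i : ℝ) ^ 2 := by
    have := sq_sum_le_card_mul_sum_sq (s := (Finset.univ : Finset (Fin N)))
      (f := fun i => (a i : ℝ))
    simpa using this
  have : ((A.card : ℝ)) ^ 2 ≤ (N : ℝ) * (((A ×ˢ A).filter fun q => g q.1 = g q.2).card : ℝ) := by
    rw [hA, hP]; push_cast; exact key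
  exact_mod_cast this

def Aset (N : ℕ) (σ : Equiv.Perm (Fin N × Fin N)) : Finset (Fin N × Fin N) :=
  Finset.univ.filter fun p => (σ p).1 = p.1
def Bset (N : ℕ) (σ : Equiv.Perm (Fin N × Fin N)) : Finset (Fin N × Fin N) :=
  Finset.univ.filter fun p => (σ p).2 = p.2

lemma X_le_AB (N : ℕ) (σ : Equiv.Perm (Fin N × Fin N)) :
    Xcnt N σ (Equiv.refl (Fin N × Fin N)) ≤ (Aset N σ).card + (Bset N σ).card := by
  classical
  unfold Xcnt
  rw [Finset.filter_or]
  refine (Finset.card_union_le _ _).trans (Nat.add_le_add ?_ ?_)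
  · refine Finset.card_le_card_of_injOn (fun x => (x.1, x.2.1)) ?_ ?_
    · intro x hx
      simp only [Finset.mem_coe, Finset.mem_filter, Finset.mem_univ, true_and] at hx ⊢; simp only [Equiv.refl_apply] at hx
      simp [Aset, hx]
    · intro x hx y hy hxy
      simp only [Finset.mem_coe, Finset.mem_filter, Finset.mem_univ, true_and] at hx hy; simp only [Equiv.refl_apply] at hx hy
      simp only [Prod.mk.injEq] at hxy
      obtain ⟨h1, h2⟩ := hxy
      have : (x.1, x.2.2) = ((y.1 : Fin N), y.2.2) := by
        rw [← hx, h1, h2, hy]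
      simp only [Prod.mk.injEq] at this
      exact Prod.ext h1 (Prod.ext h2 this.2)
  · refine Finset.card_le_card_of_injOn (fun x => (x.1, x.2.1)) ?_ ?_
    · intro x hx
      simp only [Finset.mem_coe, Finset.mem_filter, Finset.mem_univ, true_and] at hx ⊢; simp only [Equiv.refl_apply] at hx
      simp [Bset, hx]
    · intro x hx y hy hxy
      simp only [Finset.mem_coe, Finset.mem_filter, Finset.mem_univ, true_and] at hx hy; simp only [Equiv.refl_apply] at hx hy
      simp only [Prod.mk.injEq] at hxy
      obtain ⟨h1, h2⟩ := hxy
      have : (x.2.2, x.2.1) = ((y.2.2 : Fin N), y.2.1) := by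
        rw [← hx, h1, h2, hy]
      simp only [Prod.mk.injEq] at this
      exact Prod.ext h1 (Prod.ext h2 this.1)

lemma A_sq_le (N : ℕ) (σ : Equiv.Perm (Fin N × Fin N)) :
    (Aset N σ).card ^ 2 ≤ N *
      (Finset.univ.filter fun x : Fin N × Fin N × Fin N =>
        (σ (x.1, x.2.1)).1 = (σ (x.1, x.2.2)).1 ∨ (σ (x.1, x.2.1)).1 = (σ (x.2.2, x.2.1)).1).card := by
  refine (cs_aux N (Aset N σ) Prod.fst).trans (Nat.mul_le_mul_left _ ?_)
  refine Finset.card_le_card_of_injOn (fun q => (q.1.1, q.1.2, q.2.2)) ?_ ?_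
  · intro q hq
    simp only [Finset.mem_coe, Finset.mem_filter, Finset.mem_product, Aset, Finset.mem_univ, true_and] at hq
    obtain ⟨⟨h1, h2⟩, h3⟩ := hq
    simp only [Finset.mem_coe, Finset.mem_filter, Finset.mem_univ, true_and]
    left
    rw [show ((q.1.1 : Fin N), q.1.2) = q.1 from rfl, h1]
    rw [show ((q.1.1 : Fin N), q.2.2) = q.2 from h3 ▸ rfl, h2]
    exact h3
  · intro q hq r hr hqr
    simp only [Finset.mem_coe, Finset.mem_filter, Finset.mem_product] at hq hr
    simp only [Prod.mk.injEq] at hqr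
    obtain ⟨e1, e2, e3⟩ := hqr
    refine Prod.ext (Prod.ext e1 e2) (Prod.ext ?_ e3)
    rw [← hq.2, ← hr.2, e1]

lemma B_sq_le (N : ℕ) (σ : Equiv.Perm (Fin N × Fin N)) :
    (Bset N σ).card ^ 2 ≤ N *
      (Finset.univ.filter fun x : Fin N × Fin N × Fin N =>
        (σ (x.1, x.2.1)).2 = (σ (x.1, x.2.2)).2 ∨ (σ (x.1, x.2.1)).2 = (σ (x.2.2, x.2.1)).2).card := by
  refine (cs_aux N (Bset N σ) Prod.snd).trans (Nat.mul_le_mul_left _ ?_)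
  refine Finset.card_le_card_of_injOn (fun q => (q.1.1, q.1.2, q.2.1)) ?_ ?_
  · intro q hq
    simp only [Finset.mem_coe, Finset.mem_filter, Finset.mem_product, Bset, Finset.mem_univ, true_and] at hq
    obtain ⟨⟨h1, h2⟩, h3⟩ := hq
    simp only [Finset.mem_coe, Finset.mem_filter, Finset.mem_univ, true_and]
    right
    rw [show ((q.1.1 : Fin N), q.1.2) = q.1 from rfl, h1]
    rw [show ((q.2.1 : Fin N), q.1.2) = q.2 from h3 ▸ rfl, h2]
    exact h3
  · intro q hq r hr hqr
    simp only [Finset.mem_coe, Finset.mem_filter, Finset.mem_product] at hq hr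
    simp only [Prod.mk.injEq] at hqr
    obtain ⟨e1, e2, e3⟩ := hqr
    refine Prod.ext (Prod.ext e1 e2) (Prod.ext e3 ?_)
    rw [← hq.2, ← hr.2, e2]

lemma X_real_bound (N : ℕ) (hN : 1 ≤ N) (σ : Equiv.Perm (Fin N × Fin N)) :
    (Xcnt N σ (Equiv.refl (Fin N × Fin N)) : ℝ) / (N : ℝ) ^ 2 ≤
      2 * Real.sqrt ((Ycnt N σ σ : ℝ) / (N : ℝ) ^ 3) := by
  have hN0 : (0:ℝ) < N := by exact_mod_cast hN
  have hAY : (Aset N σ).card ^ 2 ≤ N * Ycnt N σ σ :=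
    (A_sq_le N σ).trans (Nat.mul_le_mul_left _ (by unfold Ycnt; omega))
  have hBY : (Bset N σ).card ^ 2 ≤ N * Ycnt N σ σ :=
    (B_sq_le N σ).trans (Nat.mul_le_mul_left _ (by unfold Ycnt; omega))
  have cast_sqrt : ∀ a : ℕ, a ^ 2 ≤ N * Ycnt N σ σ →
      (a : ℝ) ≤ Real.sqrt ((N : ℝ) * (Ycnt N σ σ : ℝ)) := by
    intro a h
    rw [show ((N:ℝ) * (Ycnt N σ σ : ℝ)) = ((N * Ycnt N σ σ : ℕ) : ℝ) by push_cast; ring]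
    rw [Real.le_sqrt (by positivity) (by positivity)]
    exact_mod_cast h
  have hX : (Xcnt N σ (Equiv.refl (Fin N × Fin N)) : ℝ) ≤
      2 * Real.sqrt ((N : ℝ) * (Ycnt N σ σ : ℝ)) := by
    calc (Xcnt N σ (Equiv.refl (Fin N × Fin N)) : ℝ)
        ≤ ((Aset N σ).card : ℝ) + ((Bset N σ).card : ℝ) := by
          exact_mod_cast X_le_AB N σ
      _ ≤ Real.sqrt ((N : ℝ) * (Ycnt N σ σ : ℝ)) + Real.sqrt ((N : ℝ) * (Ycnt N σ σ : ℝ)) :=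
          add_le_add (cast_sqrt _ hAY) (cast_sqrt _ hBY)
      _ = 2 * Real.sqrt ((N : ℝ) * (Ycnt N σ σ : ℝ)) := by ring
  have hdiv : Real.sqrt ((N : ℝ) * (Ycnt N σ σ : ℝ)) / (N : ℝ) ^ 2 =
      Real.sqrt ((Ycnt N σ σ : ℝ) / (N : ℝ) ^ 3) := by
    have : (Ycnt N σ σ : ℝ) / (N : ℝ) ^ 3 = ((N : ℝ) * (Ycnt N σ σ : ℝ)) / (N : ℝ) ^ 4 := by
      field_simp
    rw [this, Real.sqrt_div (by positivity),
      show ((N:ℝ))^4 = (((N:ℝ))^2)^2 by ring, Real.sqrt_sq (by positivity)]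
  rw [div_le_iff₀ (by positivity), ← hdiv]
  calc (Xcnt N σ (Equiv.refl (Fin N × Fin N)) : ℝ)
      ≤ 2 * Real.sqrt ((N : ℝ) * (Ycnt N σ σ : ℝ)) := hX
    _ = 2 * (Real.sqrt ((N : ℝ) * (Ycnt N σ σ : ℝ)) / (N : ℝ) ^ 2) * (N : ℝ) ^ 2 := by
        field_simp

theorem stmt3 :
    (∀ (N : ℕ), 1 ≤ N → ∀ σ : Equiv.Perm (Fin N × Fin N), Zcnt N σ ≤ N * Ycnt N σ σ) ∧
    (∀ σ : (N : ℕ) → Equiv.Perm (Fin N × Fin N),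
      Tendsto (fun N : ℕ => (Ycnt N (σ N) (σ N) : ℝ) / (N : ℝ) ^ 3) atTop (nhds 0) →
      Tendsto (fun N : ℕ => (Zcnt N (σ N) : ℝ) / (N : ℝ) ^ 4) atTop (nhds 0) ∧
      Tendsto (fun N : ℕ => (Xcnt N (σ N) (Equiv.refl (Fin N × Fin N)) : ℝ) / (N : ℝ) ^ 2)
        atTop (nhds 0)) := by
  constructor
  · exact fun N _ σ => Z_le_NY N σ
  · intro σ hY
    constructor
    · refine squeeze_zero' (Eventually.of_forall fun N => by positivity) ?_ hY
      filter_upwards [eventually_ge_atTop 1] with N hN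
      have hN0 : (0:ℝ) < N := by exact_mod_cast hN
      have h := Z_le_NY N (σ N)
      have h' : (Zcnt N (σ N) : ℝ) ≤ (N : ℝ) * (Ycnt N (σ N) (σ N) : ℝ) := by
        exact_mod_cast h
      rw [div_le_div_iff₀ (by positivity) (by positivity)]
      calc (Zcnt N (σ N) : ℝ) * (N : ℝ) ^ 3
          ≤ ((N : ℝ) * (Ycnt N (σ N) (σ N) : ℝ)) * (N : ℝ) ^ 3 := by
            exact mul_le_mul_of_nonneg_right h' (by positivity)
        _ = (Ycnt N (σ N) (σ N) : ℝ) * (N : ℝ) ^ 4 := by ring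
    · have hg : Tendsto (fun N : ℕ => 2 * Real.sqrt ((Ycnt N (σ N) (σ N) : ℝ) / (N : ℝ) ^ 3))
          atTop (nhds 0) := by
        have := (Real.continuous_sqrt.tendsto 0).comp hY
        rw [Real.sqrt_zero] at this
        simpa using this.const_mul 2
      refine squeeze_zero' (Eventually.of_forall fun N => by positivity) ?_ hg
      filter_upwards [eventually_ge_atTop 1] with N hN
      exact X_real_bound N hN (σ N)
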